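/- Let f ∈ K[[x₁,...,x_e]][y] be monic in y and let C = {c ∈ ℝ^e : c₁ ≥ -(c₂+...+c_e), cᵢ ≥ 0 for i ≥ 2}. Then f is irreducible in K_C[[x]][y] if and only if F(X₁,...,X_e,y) = f(X₁, X₂X₁, ..., X_eX₁, y) is irreducible in K[[X₁,...,X_e]][y]. -/

import Mathlib

open Finset

namespace Stmt19Aux

variable {K : Type*} [Field K] {e : ℕ} {Γ : Type*} [AddCommGroup Γ] [LinearOrder Γ] [IsOrderedAddMonoid Γ]

section Basic

variable (ψ : Γ ≃+ (Fin e → ℤ))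

/-- exponents in the cone -/
def Good (γ : Γ) : Prop := ∀ i, 0 ≤ ψ γ i

noncomputable def toExp (γ : Γ) : Fin e →₀ ℕ :=
  Finsupp.equivFunOnFinite.symm fun i => (ψ γ i).toNat

def ofExp (a : Fin e →₀ ℕ) : Γ := ψ.symm fun i => (a i : ℤ)

@[simp] lemma toExp_apply (γ : Γ) (i : Fin e) : toExp ψ γ i = (ψ γ i).toNat := rfl

lemma good_ofExp (a : Fin e →₀ ℕ) : Good ψ (ofExp ψ a) := by
  intro i
  simp only [ofExp, AddEquiv.apply_symm_apply]
  exact Int.ofNat_nonneg _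

lemma toExp_ofExp (a : Fin e →₀ ℕ) : toExp ψ (ofExp ψ a) = a := by
  ext i
  simp [toExp, ofExp]

lemma ofExp_toExp {γ : Γ} (h : Good ψ γ) : ofExp ψ (toExp ψ γ) = γ := by
  have : (fun i => ((toExp ψ γ i : ℕ) : ℤ)) = ψ γ := by
    funext i
    simp [toExp, Int.toNat_of_nonneg (h i)]
  rw [ofExp, this, AddEquiv.symm_apply_apply]

lemma ofExp_add (a b : Fin e →₀ ℕ) : ofExp ψ (a + b) = ofExp ψ a + ofExp ψ b := by
  rw [ofExp, ofExp, ofExp, ← map_add]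
  congr 1

lemma good_zero : Good ψ (0 : Γ) := by intro i; simp

lemma good_add {γ δ : Γ} (hγ : Good ψ γ) (hδ : Good ψ δ) : Good ψ (γ + δ) := by
  intro i
  rw [map_add]
  exact add_nonneg (hγ i) (hδ i)

lemma toExp_add {γ δ : Γ} (hγ : Good ψ γ) (hδ : Good ψ δ) :
    toExp ψ (γ + δ) = toExp ψ γ + toExp ψ δ := by
  ext i
  simp only [toExp_apply, Finsupp.coe_add, Pi.add_apply, map_add]
  have h1 := hγ i
  have h2 := hδ i
  change (ψ γ i + ψ δ i).toNat = (ψ γ i).toNat + (ψ δ i).toNat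
  omega

lemma toExp_zero : toExp ψ (0 : Γ) = 0 := by
  ext i; simp

lemma toExp_eq_zero_iff {γ : Γ} (h : Good ψ γ) : toExp ψ γ = 0 ↔ γ = 0 := by
  constructor
  · intro h0
    have := ofExp_toExp ψ h
    rw [h0] at this
    rw [← this, ofExp]
    simp only [Finsupp.coe_zero, Pi.zero_apply, Int.natCast_zero]
    rw [show (fun _ : Fin e => (0:ℤ)) = (0 : Fin e → ℤ) from rfl, map_zero]
  · rintro rfl; exact toExp_zero ψ

end Basic

section Hahn

variable (ψ : Γ ≃+ (Fin e → ℤ)) (hmono : ∀ γ : Γ, Good ψ γ → 0 ≤ γ)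

include hmono

lemma isPWO_good : {γ : Γ | Good ψ γ}.IsPWO := by
  intro F'
  set F : ℕ → Γ := fun k => (F' k).1
  have hF : ∀ k, Good ψ (F k) := fun k => (F' k).2
  obtain ⟨m, n, hmn, hle⟩ :=
    (Set.isPWO_of_wellQuasiOrderedLE (Set.univ : Set (Fin e →₀ ℕ)))
      (fun k => ⟨toExp ψ (F k), Set.mem_univ _⟩)
  refine ⟨m, n, hmn, ?_⟩
  have hgood : Good ψ (F n - F m) := by
    intro i
    have hi := Finsupp.le_def.mp hle i
    simp only [toExp_apply] at hi
    have h1 : ψ (F m) i ≤ ψ (F n) i := by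
      have hm0 : 0 ≤ ψ (F m) i := hF m i
      have hn0 : 0 ≤ ψ (F n) i := hF n i
      omega
    have : ψ (F n - F m) i = ψ (F n) i - ψ (F m) i := by
      rw [map_sub]; rfl
    omega
  exact sub_nonneg.mp (hmono _ hgood)

open Classical in
/-- The map from multivariate power series to Hahn series supported in the cone. -/
noncomputable def toHahnFun (P : MvPowerSeries (Fin e) K) : HahnSeries Γ K where
  coeff γ := if Good ψ γ then MvPowerSeries.coeff (R := K) (toExp ψ γ) P else 0
  isPWO_support' := (isPWO_good ψ hmono).mono (fun γ hγ => by
    by_contra h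
    exact hγ (if_neg h))

open Classical in
lemma toHahnFun_coeff (P : MvPowerSeries (Fin e) K) (γ : Γ) :
    (toHahnFun ψ hmono P).coeff γ =
      if Good ψ γ then MvPowerSeries.coeff (R := K) (toExp ψ γ) P else 0 := rfl

lemma support_toHahnFun (P : MvPowerSeries (Fin e) K) :
    (toHahnFun ψ hmono P).support ⊆ {γ | Good ψ γ} := by
  intro γ hγ
  by_contra h
  simp only [Set.mem_setOf_eq] at h
  rw [HahnSeries.mem_support, toHahnFun_coeff, if_neg h] at hγ
  exact hγ rfl

lemma toHahnFun_one : toHahnFun ψ hmono (1 : MvPowerSeries (Fin e) K) = 1 := by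
  ext γ
  classical
  rw [toHahnFun_coeff, HahnSeries.coeff_one, MvPowerSeries.coeff_one]
  by_cases h : Good ψ γ
  · rw [if_pos h]
    by_cases h0 : γ = 0
    · subst h0
      rw [if_pos rfl, if_pos (toExp_zero ψ)]
    · rw [if_neg h0, if_neg (fun hc => h0 ((toExp_eq_zero_iff ψ h).mp hc))]
  · rw [if_neg h, if_neg (fun h0 : γ = 0 => h (h0 ▸ good_zero ψ))]

lemma toHahnFun_add (P Q : MvPowerSeries (Fin e) K) :
    toHahnFun ψ hmono (P + Q) = toHahnFun ψ hmono P + toHahnFun ψ hmono Q := by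
  ext γ
  classical
  rw [HahnSeries.coeff_add, toHahnFun_coeff, toHahnFun_coeff, toHahnFun_coeff]
  by_cases h : Good ψ γ
  · simp [h]
  · simp [h]

lemma toHahnFun_mul (P Q : MvPowerSeries (Fin e) K) :
    toHahnFun ψ hmono (P * Q) = toHahnFun ψ hmono P * toHahnFun ψ hmono Q := by
  classical
  ext γ
  rw [HahnSeries.coeff_mul, toHahnFun_coeff]
  by_cases hγ : Good ψ γ
  · rw [if_pos hγ, MvPowerSeries.coeff_mul]
    symm
    refine Finset.sum_bij_ne_zero (fun ij hij _ => (toExp ψ ij.1, toExp ψ ij.2)) ?_ ?_ ?_ ?_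
    · intro ij h₁ h₂
      rw [Finset.mem_addAntidiagonal] at h₁
      obtain ⟨hm1, hm2, hsum⟩ := h₁
      have g1 : Good ψ ij.1 := support_toHahnFun ψ hmono P hm1
      have g2 : Good ψ ij.2 := support_toHahnFun ψ hmono Q hm2
      rw [Finset.HasAntidiagonal.mem_antidiagonal]
      rw [← toExp_add ψ g1 g2, hsum]
    · intro a h₁a h₂a b h₁b h₂b hab
      rw [Finset.mem_addAntidiagonal] at h₁a h₁b
      have ga1 : Good ψ a.1 := support_toHahnFun ψ hmono P h₁a.1
      have ga2 : Good ψ a.2 := support_toHahnFun ψ hmono Q h₁a.2.1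
      have gb1 : Good ψ b.1 := support_toHahnFun ψ hmono P h₁b.1
      have gb2 : Good ψ b.2 := support_toHahnFun ψ hmono Q h₁b.2.1
      have e1 : toExp ψ a.1 = toExp ψ b.1 := congrArg Prod.fst hab
      have e2 : toExp ψ a.2 = toExp ψ b.2 := congrArg Prod.snd hab
      have f1 : a.1 = b.1 := by
        rw [← ofExp_toExp ψ ga1, e1, ofExp_toExp ψ gb1]
      have f2 : a.2 = b.2 := by
        rw [← ofExp_toExp ψ ga2, e2, ofExp_toExp ψ gb2]
      exact Prod.ext f1 f2
    · intro ab hab hne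
      rw [Finset.HasAntidiagonal.mem_antidiagonal] at hab
      have hP : MvPowerSeries.coeff (R := K) ab.1 P ≠ 0 := fun h => hne (by rw [h, zero_mul])
      have hQ : MvPowerSeries.coeff (R := K) ab.2 Q ≠ 0 := fun h => hne (by rw [h, mul_zero])
      refine ⟨(ofExp ψ ab.1, ofExp ψ ab.2), ?_, ?_, ?_⟩
      · rw [Finset.mem_addAntidiagonal]
        refine ⟨?_, ?_, ?_⟩
        · rw [HahnSeries.mem_support, toHahnFun_coeff, if_pos (good_ofExp ψ ab.1),
            toExp_ofExp]
          exact hP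
        · rw [HahnSeries.mem_support, toHahnFun_coeff, if_pos (good_ofExp ψ ab.2),
            toExp_ofExp]
          exact hQ
        · rw [← ofExp_add, hab, ofExp_toExp ψ hγ]
      · rw [toHahnFun_coeff, toHahnFun_coeff, if_pos (good_ofExp ψ ab.1),
          if_pos (good_ofExp ψ ab.2), toExp_ofExp, toExp_ofExp]
        exact fun h => hne h
      · simp [toExp_ofExp]
    · intro ij h₁ h₂
      rw [Finset.mem_addAntidiagonal] at h₁
      have g1 : Good ψ ij.1 := support_toHahnFun ψ hmono P h₁.1
      have g2 : Good ψ ij.2 := support_toHahnFun ψ hmono Q h₁.2.1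
      rw [toHahnFun_coeff, toHahnFun_coeff, if_pos g1, if_pos g2]
  · rw [if_neg hγ]
    symm
    refine Finset.sum_eq_zero ?_
    intro ij hij
    rw [Finset.mem_addAntidiagonal] at hij
    exact absurd (hij.2.2 ▸ good_add ψ (support_toHahnFun ψ hmono P hij.1)
      (support_toHahnFun ψ hmono Q hij.2.1)) hγ

/-- The map bundled as a ring homomorphism. -/
noncomputable def toHahn : MvPowerSeries (Fin e) K →+* HahnSeries Γ K where
  toFun := toHahnFun ψ hmono
  map_one' := toHahnFun_one ψ hmono
  map_mul' := toHahnFun_mul ψ hmono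
  map_zero' := by
    classical
    ext γ
    rw [toHahnFun_coeff]
    simp
  map_add' := toHahnFun_add ψ hmono

open Classical in
lemma toHahn_coeff (P : MvPowerSeries (Fin e) K) (γ : Γ) :
    (toHahn ψ hmono P).coeff γ =
      if Good ψ γ then MvPowerSeries.coeff (R := K) (toExp ψ γ) P else 0 := rfl

lemma toHahn_injective : Function.Injective (toHahn (K := K) ψ hmono) := by
  classical
  intro P Q h
  ext a
  have h2 := congrArg (fun s => HahnSeries.coeff s (ofExp ψ a)) h
  rw [toHahn_coeff, toHahn_coeff, if_pos (good_ofExp ψ a), if_pos (good_ofExp ψ a),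
    toExp_ofExp] at h2
  exact h2

lemma exists_preimage (s : HahnSeries Γ K) (hs : ∀ γ ∈ s.support, Good ψ γ) :
    ∃ P : MvPowerSeries (Fin e) K, toHahn ψ hmono P = s := by
  classical
  refine ⟨(fun a => s.coeff (ofExp ψ a) : MvPowerSeries (Fin e) K), ?_⟩
  ext γ
  show (if Good ψ γ then MvPowerSeries.coeff (R := K) (toExp ψ γ)
    (fun a => s.coeff (ofExp ψ a)) else 0) = s.coeff γ
  by_cases h : Good ψ γ
  · rw [if_pos h]
    show s.coeff (ofExp ψ (toExp ψ γ)) = s.coeff γ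
    rw [ofExp_toExp ψ h]
  · rw [if_neg h]
    by_contra hc
    exact h (hs γ (HahnSeries.mem_support s γ |>.mpr fun h0 => hc h0.symm))

lemma exists_poly_preimage (g : Polynomial (HahnSeries Γ K))
    (hsupp : ∀ k : ℕ, ∀ γ ∈ (g.coeff k).support, Good ψ γ) :
    ∃ G : Polynomial (MvPowerSeries (Fin e) K), G.map (toHahn ψ hmono) = g := by
  choose P hP using fun k => exists_preimage ψ hmono (g.coeff k) (hsupp k)
  refine ⟨∑ k ∈ range (g.natDegree + 1), Polynomial.C (P k) * Polynomial.X ^ k, ?_⟩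
  rw [Polynomial.map_sum]
  conv_rhs => rw [g.as_sum_range_C_mul_X_pow]
  refine Finset.sum_congr rfl fun k _ => ?_
  rw [Polynomial.map_mul, Polynomial.map_C, Polynomial.map_pow, Polynomial.map_X, hP]

end Hahn


section Shear

variable {m : ℕ}

/-- The shear `v ↦ (∑ v, v₂, ..., v_m)` on `ℤ^m` (at coordinate `i0`). -/
def shear (i0 : Fin m) : (Fin m → ℤ) ≃+ (Fin m → ℤ) where
  toFun v i := if i = i0 then ∑ j, v j else v i
  invFun w i := if i = i0 then w i0 - ∑ j ∈ Finset.univ.erase i0, w j else w i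
  left_inv v := by
    funext i
    show (if i = i0 then (if i0 = i0 then ∑ j, v j else v i0)
        - ∑ j ∈ Finset.univ.erase i0, (if j = i0 then ∑ l, v l else v j)
      else (if i = i0 then ∑ j, v j else v i)) = v i
    by_cases hi : i = i0
    · have h1 : ∑ j ∈ Finset.univ.erase i0,
          (if j = i0 then ∑ l, v l else v j) = ∑ j ∈ Finset.univ.erase i0, v j :=
        Finset.sum_congr rfl fun j hj => if_neg (Finset.mem_erase.mp hj).1
      rw [if_pos hi, if_pos rfl, h1, hi]
      have h2 := Finset.add_sum_erase Finset.univ v (Finset.mem_univ i0)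
      omega
    · rw [if_neg hi, if_neg hi]
  right_inv w := by
    funext i
    show (if i = i0 then
        ∑ j, (if j = i0 then w i0 - ∑ l ∈ Finset.univ.erase i0, w l else w j)
      else (if i = i0 then w i0 - ∑ j ∈ Finset.univ.erase i0, w j else w i)) = w i
    by_cases hi : i = i0
    · rw [if_pos hi, hi]
      have h2 := Finset.add_sum_erase Finset.univ
        (fun j => if j = i0 then w i0 - ∑ l ∈ Finset.univ.erase i0, w l else w j)
        (Finset.mem_univ i0)
      rw [if_pos rfl] at h2
      have h1 : ∑ j ∈ Finset.univ.erase i0,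
          (if j = i0 then w i0 - ∑ l ∈ Finset.univ.erase i0, w l else w j)
          = ∑ j ∈ Finset.univ.erase i0, w j :=
        Finset.sum_congr rfl fun j hj => if_neg (Finset.mem_erase.mp hj).1
      rw [h1] at h2
      omega
    · rw [if_neg hi, if_neg hi]
  map_add' v w := by
    funext i
    by_cases hi : i = i0
    · simp only [if_pos hi, Pi.add_apply, if_pos hi, Finset.sum_add_distrib]
    · simp only [if_neg hi, Pi.add_apply]

lemma shear_apply (i0 : Fin m) (v : Fin m → ℤ) (i : Fin m) :
    shear i0 v i = if i = i0 then ∑ j, v j else v i := rfl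

lemma shear_symm_apply (i0 : Fin m) (w : Fin m → ℤ) :
    (shear i0).symm w = fun i =>
      if i = i0 then w i0 - ∑ j ∈ Finset.univ.erase i0, w j else w i := rfl

end Shear

end Stmt19Aux


open Stmt19Aux in
/-- let `f ∈ K[[x]][y]` be monic in `y`, viewed inside
`K_C[[x]][y]` for the line free cone
`C = {c : c₁ ≥ -(c₂+⋯+c_e), cᵢ ≥ 0 (i ≥ 2)}`, and let
`F(X,y) = f(X₁, X₂X₁, ..., X_eX₁, y)`.  Then `f` is irreducible in
`K_C[[x]][y]` iff `F` is irreducible in `K[[X]][y]`.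

The ring `K_C[[x]]` is modelled as the Hahn series over an abelian group `Γ`
identified with `ℤ^e` via `φ` and linearly ordered compatibly with `C`, with
support in `C`; `F` and `f` correspond via the exponent bijection
`c ↦ (c₁+⋯+c_e, c₂, ..., c_e)` of the substitution.  Irreducibility of a monic
polynomial of degree `n` is expressed as the nonexistence of a factorization
into two monic factors of degrees strictly between `0` and `n` (with
coefficients supported in `C`, on the `K_C[[x]]` side). -/
theorem stmt_19 (K : Type*) [Field K] (e : ℕ) (he : 0 < e)
    (Γ : Type*) [AddCommGroup Γ] [LinearOrder Γ] [IsOrderedAddMonoid Γ] (φ : Γ ≃+ (Fin e → ℤ))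
    (C : Set (Fin e → ℝ))
    (hC : C = {c | (∀ i : Fin e, i ≠ ⟨0, he⟩ → 0 ≤ c i) ∧
      -(∑ i ∈ Finset.univ.erase ⟨0, he⟩, c i) ≤ c ⟨0, he⟩})
    (hcompat : ∀ γ : Γ, (fun i => (φ γ i : ℝ)) ∈ C → 0 ≤ γ)
    (n : ℕ) (hn : 0 < n)
    (f : Polynomial (HahnSeries Γ K)) (hf : f.Monic) (hfdeg : f.natDegree = n)
    (hfsupp : ∀ k : ℕ, ∀ γ ∈ (f.coeff k).support, (fun i => (φ γ i : ℝ)) ∈ C)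
    (hfnat : ∀ k : ℕ, ∀ γ ∈ (f.coeff k).support, ∀ i : Fin e, 0 ≤ φ γ i)
    (F : Polynomial (MvPowerSeries (Fin e) K)) (hF : F.Monic) (hFdeg : F.natDegree = n)
    (hcorr : ∀ (k : ℕ) (a : Fin e →₀ ℕ),
      MvPowerSeries.coeff (R := K) a (F.coeff k) =
        (f.coeff k).coeff (φ.symm (fun i =>
          if i = ⟨0, he⟩ then (a ⟨0, he⟩ : ℤ) - ∑ j ∈ Finset.univ.erase ⟨0, he⟩, (a j : ℤ)
          else (a i : ℤ)))) :
    ((¬ ∃ g h : Polynomial (HahnSeries Γ K),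
        g.Monic ∧ h.Monic ∧ 0 < g.natDegree ∧ g.natDegree < n ∧
        0 < h.natDegree ∧ h.natDegree < n ∧
        (∀ k : ℕ, ∀ γ ∈ (g.coeff k).support, (fun i => (φ γ i : ℝ)) ∈ C) ∧
        (∀ k : ℕ, ∀ γ ∈ (h.coeff k).support, (fun i => (φ γ i : ℝ)) ∈ C) ∧
        f = g * h) ↔
      (¬ ∃ G H : Polynomial (MvPowerSeries (Fin e) K),
        G.Monic ∧ H.Monic ∧ 0 < G.natDegree ∧ G.natDegree < n ∧
        0 < H.natDegree ∧ H.natDegree < n ∧ F = G * H)) := by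
  classical
  subst hC
  set ψ : Γ ≃+ (Fin e → ℤ) := φ.trans (shear ⟨0, he⟩) with hψdef
  have hψ : ∀ γ i, ψ γ i = if i = ⟨0, he⟩ then ∑ j, φ γ j else φ γ i := by
    intro γ i
    rw [hψdef, AddEquiv.trans_apply, shear_apply]
  have hψsymm : ∀ v : Fin e → ℤ, ψ.symm v = φ.symm (fun i =>
      if i = ⟨0, he⟩ then v ⟨0, he⟩ - ∑ j ∈ Finset.univ.erase ⟨0, he⟩, v j else v i) := by
    intro v
    rw [hψdef, AddEquiv.symm_trans_apply, shear_symm_apply]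
  have goodIff : ∀ γ : Γ, Good ψ γ ↔ (fun i => (φ γ i : ℝ)) ∈
      {c : Fin e → ℝ | (∀ i : Fin e, i ≠ ⟨0, he⟩ → 0 ≤ c i) ∧
        -(∑ i ∈ Finset.univ.erase ⟨0, he⟩, c i) ≤ c ⟨0, he⟩} := by
    intro γ
    simp only [Set.mem_setOf_eq]
    constructor
    · intro h
      refine ⟨fun i hi => ?_, ?_⟩
      · have := h i
        rw [hψ, if_neg hi] at this
        exact_mod_cast this
      · have := h ⟨0, he⟩
        rw [hψ, if_pos rfl] at this
        have h2 : (0:ℝ) ≤ ∑ j, (φ γ j : ℝ) := by exact_mod_cast this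
        rw [← Finset.add_sum_erase Finset.univ (fun j => ((φ γ j : ℝ)))
          (Finset.mem_univ ⟨0, he⟩)] at h2
        linarith
    · rintro ⟨h1, h2⟩ i
      rw [hψ]
      by_cases hi : i = ⟨0, he⟩
      · rw [if_pos hi]
        have h3 : (0:ℝ) ≤ ∑ j, (φ γ j : ℝ) := by
          rw [← Finset.add_sum_erase Finset.univ (fun j => ((φ γ j : ℝ)))
            (Finset.mem_univ ⟨0, he⟩)]
          linarith
        exact_mod_cast h3
      · rw [if_neg hi]
        exact_mod_cast h1 i hi
  have hmono : ∀ γ : Γ, Good ψ γ → 0 ≤ γ := fun γ h => hcompat γ ((goodIff γ).1 h)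
  set T : MvPowerSeries (Fin e) K →+* HahnSeries Γ K := toHahn ψ hmono with hTdef
  have hinj : Function.Injective T := toHahn_injective ψ hmono
  have hcorr' : ∀ (k : ℕ) (a : Fin e →₀ ℕ),
      MvPowerSeries.coeff (R := K) a (F.coeff k) = (f.coeff k).coeff (ofExp ψ a) := by
    intro k a
    rw [ofExp, hψsymm]
    exact hcorr k a
  have hTF : F.map T = f := by
    apply Polynomial.ext
    intro k
    rw [Polynomial.coeff_map]
    ext γ
    rw [hTdef, toHahn_coeff]
    by_cases hg : Good ψ γ
    · rw [if_pos hg, hcorr' k (toExp ψ γ), ofExp_toExp ψ hg]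
    · rw [if_neg hg]
      by_contra hc
      have hγm : γ ∈ (f.coeff k).support := by
        rw [HahnSeries.mem_support]
        exact fun h0 => hc h0.symm
      exact hg ((goodIff γ).2 (hfsupp k γ hγm))
  have hmapinj : Function.Injective (Polynomial.map T) := Polynomial.map_injective T hinj
  have hsupportT : ∀ P : MvPowerSeries (Fin e) K, ∀ γ ∈ (T P).support, Good ψ γ :=
    fun P γ hγ => support_toHahnFun ψ hmono P hγ
  apply not_congr
  constructor
  · rintro ⟨g, h, hgm, hhm, hg0, hgn, hh0, hhn, hgs, hhs, hfgh⟩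
    obtain ⟨G, hG⟩ := exists_poly_preimage ψ hmono g
      (fun k γ hγ => (goodIff γ).2 (hgs k γ hγ))
    obtain ⟨H, hH⟩ := exists_poly_preimage ψ hmono h
      (fun k γ hγ => (goodIff γ).2 (hhs k γ hγ))
    have hdG : G.natDegree = g.natDegree := by
      rw [← hG, Polynomial.natDegree_map_eq_of_injective hinj]
    have hdH : H.natDegree = h.natDegree := by
      rw [← hH, Polynomial.natDegree_map_eq_of_injective hinj]
    refine ⟨G, H, ?_, ?_, ?_, ?_, ?_, ?_, ?_⟩
    · exact (hinj.monic_map_iff).mpr (hG ▸ hgm)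
    · exact (hinj.monic_map_iff).mpr (hH ▸ hhm)
    · omega
    · omega
    · omega
    · omega
    · apply hmapinj
      rw [Polynomial.map_mul, hG, hH, hTF, hfgh]
  · rintro ⟨G, H, hGm, hHm, hG0, hGn, hH0, hHn, hFGH⟩
    refine ⟨G.map T, H.map T, hGm.map T, hHm.map T, ?_, ?_, ?_, ?_, ?_, ?_, ?_⟩
    · rw [Polynomial.natDegree_map_eq_of_injective hinj]; exact hG0
    · rw [Polynomial.natDegree_map_eq_of_injective hinj]; exact hGn
    · rw [Polynomial.natDegree_map_eq_of_injective hinj]; exact hH0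
    · rw [Polynomial.natDegree_map_eq_of_injective hinj]; exact hHn
    · intro k γ hγ
      rw [Polynomial.coeff_map] at hγ
      exact (goodIff γ).1 (hsupportT _ γ hγ)
    · intro k γ hγ
      rw [Polynomial.coeff_map] at hγ
      exact (goodIff γ).1 (hsupportT _ γ hγ)
    · rw [← hTF, hFGH, Polynomial.map_mul]
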